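/- Base-free form of the vertex operator at t = 1 (Γ_1 = (Σ_i U_{(i)})(Σ_j (−1)^j D_{(1^j)})): let α = (α_1 ≥ ⋯ ≥ α_l > 0) be a partition. In the ring of formal power series in x_1, …, x_m, the following identity holds: Σ_{n ≥ −l} s_{(n, α_1, …, α_l)}(x) = ( Σ_{i ≥ 0} h_i(x) ) · ( Σ_{j=0}^{l} (−1)^j Σ_μ s_μ(x) ), where the inner sum ranges over all partitions μ ⊆ α with α/μ a vertical strip of size j. (The left side is a well-defined power series since s_{(n,α)} is homogeneous of degree |α| + n, with a different degree for each n.) -/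

import Mathlib

open MvPolynomial

open scoped Classical

/-- The complete homogeneous symmetric polynomial `h_k` indexed by an integer,
with the convention `h_0 = 1` and `h_k = 0` for `k < 0`. -/
noncomputable def hInt (σ : Type*) [Fintype σ] [DecidableEq σ] (R : Type*) [CommRing R]
    (k : ℤ) : MvPolynomial σ R :=
  if 0 ≤ k then hsymm σ R k.toNat else 0

/-- The Jacobi–Trudi polynomial `s_α = det (h_{α_i + j - i})` of an arbitrary integer
sequence `α`, in the variables indexed by `σ`. -/
noncomputable def jacobiTrudi (σ : Type*) [Fintype σ] [DecidableEq σ] (R : Type*) [CommRing R]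
    {l : ℕ} (α : Fin l → ℤ) : MvPolynomial σ R :=
  Matrix.det (Matrix.of fun i j : Fin l => hInt σ R (α i + (j : ℕ) - (i : ℕ)))

/-- `λ/μ` is a vertical strip: `λ_i - μ_i ∈ {0, 1}` for every `i`. -/
def IsVerticalStrip {l : ℕ} (lam μ : Fin l → ℕ) : Prop :=
  ∀ i, μ i ≤ lam i ∧ lam i ≤ μ i + 1


section Helpers

variable {σ : Type*} [Fintype σ] [DecidableEq σ] {R : Type*} [CommRing R]

lemma multiset_X_prod_homog (s : Multiset σ) :
    (Multiset.map (X : σ → MvPolynomial σ R) s).prod.IsHomogeneous (Multiset.card s) := by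
  induction s using Multiset.induction with
  | empty => simpa using isHomogeneous_one σ R
  | cons a s ih =>
      have := (isHomogeneous_X R a).mul ih
      simpa [Multiset.map_cons, Multiset.prod_cons, add_comm] using this

lemma hsymm_isHomogeneous (n : ℕ) : (hsymm σ R n).IsHomogeneous n := by
  apply IsHomogeneous.sum
  intro s _
  have := multiset_X_prod_homog (σ := σ) (R := R) s.1
  rwa [s.2] at this

lemma hInt_neg {k : ℤ} (h : k < 0) : hInt σ R k = 0 := if_neg (not_le.mpr h)

lemma hInt_natCast (n : ℕ) : hInt σ R (n : ℤ) = hsymm σ R n := by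
  rw [hInt, if_pos (by positivity)]; simp

lemma hInt_isHomogeneous {k : ℤ} {n : ℕ} (h : k = (n : ℤ)) :
    (hInt σ R k).IsHomogeneous n := by
  subst h; rw [hInt_natCast]; exact hsymm_isHomogeneous n

lemma isHomogeneous_neg {P : MvPolynomial σ R} {n : ℕ} (h : P.IsHomogeneous n) :
    (-P).IsHomogeneous n := by
  rw [← mem_homogeneousSubmodule] at h ⊢
  exact neg_mem h

lemma jacobiTrudi_isHomogeneous {l : ℕ} (β : Fin l → ℤ) {N : ℕ} (h : ∑ i, β i = (N : ℤ)) :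
    (jacobiTrudi σ R β).IsHomogeneous N := by
  rw [jacobiTrudi, Matrix.det_apply]
  apply IsHomogeneous.sum
  intro τ _
  have hterm : (∏ i : Fin l,
      (Matrix.of fun i j : Fin l => hInt σ R (β i + (j : ℕ) - (i : ℕ))) (τ i) i).IsHomogeneous N := by
    by_cases hneg : ∀ i : Fin l, 0 ≤ β (τ i) + ((i : ℕ) : ℤ) - ((τ i : Fin l) : ℕ)
    · have hsum : ∑ i : Fin l, (β (τ i) + ((i : ℕ) : ℤ) - ((τ i : Fin l) : ℕ)) = (N : ℤ) := by
        rw [Finset.sum_sub_distrib, Finset.sum_add_distrib]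
        rw [Equiv.sum_comp τ β, Equiv.sum_comp τ (fun i : Fin l => ((i : ℕ) : ℤ))]
        rw [h]; ring
      have hp := IsHomogeneous.prod (Finset.univ) _
        (fun i : Fin l => (β (τ i) + ((i : ℕ) : ℤ) - ((τ i : Fin l) : ℕ)).toNat)
        (fun i _ => hInt_isHomogeneous (σ := σ) (R := R) (Int.toNat_of_nonneg (hneg i)).symm)
      have hNe : ∑ i : Fin l, (β (τ i) + ((i : ℕ) : ℤ) - ((τ i : Fin l) : ℕ)).toNat = N := by
        have : ((∑ i : Fin l, (β (τ i) + ((i : ℕ) : ℤ) - ((τ i : Fin l) : ℕ)).toNat : ℕ) : ℤ)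
            = (N : ℤ) := by
          push_cast
          rw [Finset.sum_congr rfl (fun i _ => Int.toNat_of_nonneg (hneg i))]
          exact hsum
        exact_mod_cast this
      rw [hNe] at hp
      exact hp
    · push_neg at hneg
      obtain ⟨i, hi⟩ := hneg
      have : (∏ i : Fin l,
          (Matrix.of fun i j : Fin l => hInt σ R (β i + (j : ℕ) - (i : ℕ))) (τ i) i) = 0 :=
        Finset.prod_eq_zero (Finset.mem_univ i) (by simp [Matrix.of_apply, hInt_neg hi])
      rw [this]; exact isHomogeneous_zero σ R N
  rcases Int.units_eq_one_or (Equiv.Perm.sign τ) with hs | hs <;> rw [hs]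
  · simpa using hterm
  · rw [Units.smul_def]
    simpa using isHomogeneous_neg hterm

lemma jacobiTrudi_eq_zero_of_neg {l : ℕ} (β : Fin l → ℤ) (h : ∑ i, β i < 0) :
    (jacobiTrudi σ R β : MvPolynomial σ R) = 0 := by
  rw [jacobiTrudi, Matrix.det_apply]
  apply Finset.sum_eq_zero
  intro τ _
  have hsum : ∑ i : Fin l, (β (τ i) + ((i : ℕ) : ℤ) - ((τ i : Fin l) : ℕ)) < 0 := by
    rw [Finset.sum_sub_distrib, Finset.sum_add_distrib]
    rw [Equiv.sum_comp τ β, Equiv.sum_comp τ (fun i : Fin l => ((i : ℕ) : ℤ))]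
    simpa using h
  have hex : ∃ i : Fin l, β (τ i) + ((i : ℕ) : ℤ) - ((τ i : Fin l) : ℕ) < 0 := by
    by_contra hc
    push_neg at hc
    exact absurd (Finset.sum_nonneg fun i _ => hc i) (not_le.mpr hsum)
  obtain ⟨i, hi⟩ := hex
  have : (∏ i : Fin l,
      (Matrix.of fun i j : Fin l => hInt σ R (β i + (j : ℕ) - (i : ℕ))) (τ i) i) = 0 :=
    Finset.prod_eq_zero (Finset.mem_univ i) (by simp [Matrix.of_apply, hInt_neg hi])
  rw [this, smul_zero]

end Helpers


lemma det_deleteCol {A : Type*} [CommRing A] {l : ℕ} (M : Matrix (Fin l) (Fin (l+1)) A)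
    (j : Fin (l+1)) :
    (Matrix.of fun p c : Fin l => M p (j.succAbove c)).det =
      ∑ S ∈ Finset.univ.filter (fun S : Finset (Fin l) => S.card = (j : ℕ)),
        (Matrix.of fun p c : Fin l => if p ∈ S then M p c.castSucc else M p c.succ).det := by
  classical
  set N : Matrix (Fin (l+1)) (Fin (l+1)) (Polynomial A) :=
    Matrix.of (Fin.cons (fun c : Fin (l+1) => (-Polynomial.X : (Polynomial A)) ^ (c : ℕ))
      (fun p c => Polynomial.C (M p c))) with hN
  set U : Matrix (Fin (l+1)) (Fin (l+1)) (Polynomial A) :=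
    Matrix.of (fun r c : Fin (l+1) =>
      (if r = c then 1 else 0) + (if (r : ℕ) + 1 = (c : ℕ) then Polynomial.X else 0)) with hU
  have hUtri : U.BlockTriangular id := by
    intro r c h
    simp only [id] at h
    have h1 : ¬ (r = c) := by intro hrc; subst hrc; exact lt_irrefl _ h
    have h2 : ¬ ((r : ℕ) + 1 = (c : ℕ)) := by
      have : (c : ℕ) < (r : ℕ) := h
      omega
    simp [hU, h1, h2]
  have hUdet : U.det = 1 := by
    rw [Matrix.det_of_upperTriangular hUtri]
    apply Finset.prod_eq_one
    intro r _
    simp [hU]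
  have hmul0 : ∀ r, (N * U) r 0 = N r 0 := by
    intro r
    rw [Matrix.mul_apply]
    have : ∀ k : Fin (l+1), N r k * U k 0 = if k = 0 then N r 0 else 0 := by
      intro k
      by_cases hk : k = (0 : Fin (l+1))
      · subst hk; simp [hU]
      · have h2 : ¬ ((k : ℕ) + 1 = ((0 : Fin (l+1)) : ℕ)) := by simp
        simp [hU, hk, h2]
    rw [Finset.sum_congr rfl (fun k _ => this k)]
    simp
  have hmuls : ∀ r (c : Fin l), (N * U) r c.succ = N r c.succ + N r c.castSucc * Polynomial.X := by
    intro r c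
    rw [Matrix.mul_apply]
    have : ∀ k : Fin (l+1), N r k * U k c.succ =
        (if k = c.succ then N r c.succ else 0) + (if k = c.castSucc then N r c.castSucc * Polynomial.X else 0) := by
      intro k
      by_cases hk1 : k = c.succ
      · subst hk1
        have h2 : ¬ ((c.succ : Fin (l+1)) : ℕ) + 1 = ((c.succ : Fin (l+1)) : ℕ) := by omega
        have h3 : ¬ (c.succ = c.castSucc) := by
          intro h; have := congrArg (Fin.val) h; simp [Fin.val_succ] at this
        simp [hU, h2, h3]
      · by_cases hk2 : k = c.castSucc
        · subst hk2
          have h1 : ¬ (c.castSucc = c.succ) := by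
            intro h; have := congrArg (Fin.val) h; simp [Fin.val_succ] at this
          have h2 : ((c.castSucc : Fin (l+1)) : ℕ) + 1 = ((c.succ : Fin (l+1)) : ℕ) := by
            simp [Fin.val_succ]
          simp [hU, h1, hk1, h2]
        · have h4 : ¬ ((k : ℕ) = (c : ℕ)) := by
            intro h
            exact hk2 (Fin.ext (by simpa using h))
          have h2 : ¬ ((k : ℕ) + 1 = ((c.succ : Fin (l+1)) : ℕ)) := by
            simp only [Fin.val_succ]
            omega
          simp [hU, hk1, hk2, h2, h4]
    rw [Finset.sum_congr rfl (fun k _ => this k)]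
    rw [Finset.sum_add_distrib]
    simp
  have hrow0 : ∀ c : Fin (l+1), N 0 c = (-Polynomial.X : (Polynomial A)) ^ (c : ℕ) := by
    intro c; simp [hN]
  have hrows : ∀ (p : Fin l) (c : Fin (l+1)), N p.succ c = Polynomial.C (M p c) := by
    intro p c; simp [hN]
  -- Laplace expansion of det N
  have laplaceN : N.det = ∑ c : Fin (l+1),
      (Polynomial.X : (Polynomial A)) ^ (c : ℕ) * Polynomial.C ((Matrix.of fun p q : Fin l => M p (c.succAbove q)).det) := by
    rw [Matrix.det_succ_row_zero]
    refine Finset.sum_congr rfl fun c _ => ?_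
    have hsub : N.submatrix Fin.succ c.succAbove =
        (Polynomial.C : A →+* (Polynomial A)).mapMatrix (Matrix.of fun p q : Fin l => M p (c.succAbove q)) := by
      ext p q
      simp [Matrix.submatrix_apply, hrows]
    rw [hrow0, hsub, ← RingHom.map_det]
    have : ((-1 : (Polynomial A))) ^ (c : ℕ) * (-Polynomial.X : (Polynomial A)) ^ (c : ℕ) = (Polynomial.X : (Polynomial A)) ^ (c : ℕ) := by
      rw [← mul_pow, neg_mul_neg, one_mul]
    rw [this]
  -- Laplace expansion of det (N * U)
  have laplaceNU : (N * U).det =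
      (Matrix.of fun p q : Fin l => Polynomial.C (M p q.succ) + Polynomial.C (M p q.castSucc) * Polynomial.X).det := by
    rw [Matrix.det_succ_row_zero]
    rw [Finset.sum_eq_single (0 : Fin (l+1))]
    · have h00 : (N * U) 0 0 = 1 := by rw [hmul0]; simp [hrow0]
      have hsub : (N * U).submatrix Fin.succ ((0 : Fin (l+1)).succAbove) =
          Matrix.of fun p q : Fin l => Polynomial.C (M p q.succ) + Polynomial.C (M p q.castSucc) * Polynomial.X := by
        ext p q
        rw [Matrix.submatrix_apply]
        rw [Fin.succAbove_zero]
        rw [hmuls, hrows, hrows]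
        simp
      rw [h00, hsub]
      simp
    · intro c _ hc
      obtain ⟨c', rfl⟩ := Fin.eq_succ_of_ne_zero hc
      rw [hmuls]
      have : N 0 c'.succ + N 0 c'.castSucc * Polynomial.X = 0 := by
        rw [hrow0, hrow0]
        have h1 : ((c'.succ : Fin (l+1)) : ℕ) = ((c'.castSucc : Fin (l+1)) : ℕ) + 1 := by
          simp [Fin.val_succ]
        rw [h1, pow_succ]
        ring
      rw [this]
      ring
    · simp
  -- multilinear expansion
  have expand : (Matrix.of fun p q : Fin l => Polynomial.C (M p q.succ) + Polynomial.C (M p q.castSucc) * Polynomial.X).det =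
      ∑ S : Finset (Fin l), (Polynomial.X : (Polynomial A)) ^ S.card *
        Polynomial.C ((Matrix.of fun p q : Fin l => if p ∈ S then M p q.castSucc else M p q.succ).det) := by
    set u : Fin l → (Fin l → (Polynomial A)) := fun p q => Polynomial.C (M p q.castSucc) with hu
    set v : Fin l → (Fin l → (Polynomial A)) := fun p q => Polynomial.C (M p q.succ) with hv
    have hmat : (Matrix.of fun p q : Fin l => Polynomial.C (M p q.succ) + Polynomial.C (M p q.castSucc) * Polynomial.X)
        = ((fun p => fun q => (Polynomial.X : (Polynomial A)) • u p q) + v) := by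
      ext p q
      simp [u, v, Pi.add_apply, smul_eq_mul]
      ring
    have hdet : ∀ (B : Matrix (Fin l) (Fin l) (Polynomial A)),
        B.det = (Matrix.detRowAlternating (R := (Polynomial A)) (n := Fin l)).toMultilinearMap B :=
      fun _ => rfl
    rw [hmat]; refine (hdet _).trans ?_
    have := (Matrix.detRowAlternating : (Fin l → (Polynomial A)) [⋀^Fin l]→ₗ[(Polynomial A)] (Polynomial A)).toMultilinearMap.map_add_univ
      (fun p => fun q => (Polynomial.X : (Polynomial A)) • u p q) v
    rw [this]
    apply Finset.sum_congr rfl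
    intro S _
    have hbase : S.piecewise (fun p => fun q => (Polynomial.X : (Polynomial A)) • u p q) v
        = S.piecewise (fun p => (Polynomial.X : (Polynomial A)) • (S.piecewise u v) p) (S.piecewise u v) := by
      ext p q
      by_cases hp : p ∈ S
      · simp [Finset.piecewise_eq_of_mem _ _ _ hp]
      · simp [Finset.piecewise_eq_of_notMem _ _ _ hp]
    rw [hbase]
    have hsmul := (Matrix.detRowAlternating :
        (Fin l → (Polynomial A)) [⋀^Fin l]→ₗ[(Polynomial A)] (Polynomial A)).toMultilinearMap.map_piecewise_smul
      (fun _ => (Polynomial.X : (Polynomial A))) (S.piecewise u v) S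
    rw [hsmul]
    rw [Finset.prod_const]
    rw [smul_eq_mul]
    congr 1
    have hpw : S.piecewise u v =
        (Polynomial.C : A →+* (Polynomial A)).mapMatrix (Matrix.of fun p q : Fin l =>
          if p ∈ S then M p q.castSucc else M p q.succ) := by
      ext p q
      by_cases hp : p ∈ S
      · simp [Finset.piecewise_eq_of_mem _ _ _ hp, hp, u]
      · simp [Finset.piecewise_eq_of_notMem _ _ _ hp, hp, v]
    refine (hdet _).symm.trans ?_
    rw [hpw, ← RingHom.map_det]
  -- combine
  have main : ∑ c : Fin (l+1),
      (Polynomial.X : (Polynomial A)) ^ (c : ℕ) * Polynomial.C ((Matrix.of fun p q : Fin l => M p (c.succAbove q)).det) =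
      ∑ S : Finset (Fin l), (Polynomial.X : (Polynomial A)) ^ S.card *
        Polynomial.C ((Matrix.of fun p q : Fin l => if p ∈ S then M p q.castSucc else M p q.succ).det) := by
    rw [← laplaceN, ← expand, ← laplaceNU, Matrix.det_mul, hUdet, mul_one]
  have hcoeff := congrArg (fun P : (Polynomial A) => P.coeff (j : ℕ)) main
  simp only [Polynomial.finset_sum_coeff] at hcoeff
  have hL : ∑ c : Fin (l+1),
      ((Polynomial.X : (Polynomial A)) ^ (c : ℕ) * Polynomial.C ((Matrix.of fun p q : Fin l => M p (c.succAbove q)).det)).coeff (j : ℕ)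
      = (Matrix.of fun p q : Fin l => M p (j.succAbove q)).det := by
    rw [Finset.sum_eq_single j]
    · rw [mul_comm, Polynomial.C_mul_X_pow_eq_monomial, Polynomial.coeff_monomial, if_pos rfl]
    · intro c _ hc
      rw [mul_comm, Polynomial.C_mul_X_pow_eq_monomial, Polynomial.coeff_monomial, if_neg]
      intro h; exact hc (Fin.ext h)
    · simp
  have hR : ∑ S : Finset (Fin l), ((Polynomial.X : (Polynomial A)) ^ S.card *
        Polynomial.C ((Matrix.of fun p q : Fin l => if p ∈ S then M p q.castSucc else M p q.succ).det)).coeff (j : ℕ)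
      = ∑ S ∈ Finset.univ.filter (fun S : Finset (Fin l) => S.card = (j : ℕ)),
        (Matrix.of fun p c : Fin l => if p ∈ S then M p c.castSucc else M p c.succ).det := by
    rw [Finset.sum_filter]
    apply Finset.sum_congr rfl
    intro S _
    rw [mul_comm, Polynomial.C_mul_X_pow_eq_monomial, Polynomial.coeff_monomial]
  rw [hL, hR] at hcoeff
  exact hcoeff

lemma not_antitone_fin {l : ℕ} {f : Fin (l+1) → ℕ} (h : ¬ Antitone f) :
    ∃ i : Fin l, f i.castSucc < f i.succ := by
  by_contra hc
  push_neg at hc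
  exact h (Fin.antitone_iff_succ_le.mpr hc)

lemma jacobiTrudi_cons (R : Type*) [CommRing R] (m l : ℕ) (α : Fin l → ℕ)
    (hα : Antitone α) (hpos : ∀ i, 0 < α i) (n : ℤ) :
    jacobiTrudi (Fin m) R (Fin.cons n fun i => (α i : ℤ)) =
      ∑ c ∈ Finset.range (l+1),
        (-1 : MvPolynomial (Fin m) R) ^ c * hInt (Fin m) R (n + c) *
          ∑ μ ∈ (Finset.Iic α).filter
              (fun μ => Antitone μ ∧ IsVerticalStrip α μ ∧ (∑ i, (α i - μ i)) = c),
            jacobiTrudi (Fin m) R (fun i => (μ i : ℤ)) := by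
  classical
  -- Step 1: regrouping subsets into partitions
  have hstep : ∀ c : ℕ,
      (∑ S ∈ Finset.univ.filter (fun S : Finset (Fin l) => S.card = c),
        jacobiTrudi (Fin m) R (fun p => (α p : ℤ) - if p ∈ S then 1 else 0))
      = ∑ μ ∈ (Finset.Iic α).filter
            (fun μ => Antitone μ ∧ IsVerticalStrip α μ ∧ (∑ i, (α i - μ i)) = c),
          jacobiTrudi (Fin m) R (fun i => (μ i : ℤ)) := by
    intro c
    have hsplit := Finset.sum_filter_add_sum_filter_not
      (Finset.univ.filter (fun S : Finset (Fin l) => S.card = c))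
      (fun S => Antitone (fun p => α p - (if p ∈ S then 1 else 0)))
      (fun S => jacobiTrudi (Fin m) R (fun p => (α p : ℤ) - if p ∈ S then 1 else 0))
    rw [← hsplit]
    have hbad : (∑ S ∈ (Finset.univ.filter (fun S : Finset (Fin l) => S.card = c)).filter
        (fun S => ¬ Antitone (fun p => α p - (if p ∈ S then 1 else 0))),
        jacobiTrudi (Fin m) R (fun p => (α p : ℤ) - if p ∈ S then 1 else 0)) = 0 := by
      apply Finset.sum_eq_zero
      intro S hS
      simp only [Finset.mem_filter] at hS
      obtain ⟨-, hbadS⟩ := hS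
      cases l with
      | zero => exact absurd (fun a _ _ => a.elim0) hbadS
      | succ l' =>
        obtain ⟨i, hi⟩ := not_antitone_fin hbadS
        have hi' : α i.castSucc - (if i.castSucc ∈ S then 1 else 0) <
            α i.succ - (if i.succ ∈ S then 1 else 0) := hi
        have haa : α i.succ ≤ α i.castSucc := hα (Fin.castSucc_le_succ i)
        have hpos1 := hpos i.castSucc
        have hpos2 := hpos i.succ
        have h1 : i.castSucc ∈ S := by
          by_contra h1
          rw [if_neg h1] at hi'
          by_cases h2 : i.succ ∈ S
          · rw [if_pos h2] at hi'; omega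
          · rw [if_neg h2] at hi'; omega
        have h2 : i.succ ∉ S := by
          intro h2
          rw [if_pos h1, if_pos h2] at hi'; omega
        rw [if_pos h1, if_neg h2] at hi'
        have heq : α i.castSucc = α i.succ := by omega
        rw [jacobiTrudi]
        apply Matrix.det_zero_of_row_eq (Fin.castSucc_lt_succ (i := i)).ne
        funext q
        simp only [Matrix.of_apply, if_pos h1, if_neg h2]
        congr 1
        have hval : ((i.succ : Fin (l'+1)) : ℕ) = ((i.castSucc : Fin (l'+1)) : ℕ) + 1 := by
          simp [Fin.val_succ]
        rw [heq, hval]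
        push_cast
        ring
    rw [hbad, add_zero]
    refine Finset.sum_bij'
      (fun S _ => fun p => α p - (if p ∈ S then 1 else 0))
      (fun μ _ => Finset.univ.filter (fun p => μ p ≠ α p)) ?_ ?_ ?_ ?_ ?_
    · -- hi : maps into target
      intro S hS
      simp only [Finset.mem_filter, Finset.mem_univ, true_and] at hS
      obtain ⟨hcard, hgood⟩ := hS
      simp only [Finset.mem_filter, Finset.mem_Iic]
      refine ⟨?_, hgood, ?_, ?_⟩
      · intro p; exact Nat.sub_le _ _
      · intro p
        have := hpos p
        constructor
        · exact Nat.sub_le _ _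
        · by_cases hp : p ∈ S <;> simp [hp] <;> omega
      · have hterm : ∀ p : Fin l, α p - (α p - (if p ∈ S then 1 else 0))
            = (if p ∈ S then 1 else 0) := by
          intro p
          have := hpos p
          by_cases hp : p ∈ S <;> simp [hp] <;> omega
        rw [Finset.sum_congr rfl (fun p _ => hterm p)]
        rw [Finset.sum_ite_mem, Finset.univ_inter, Finset.sum_const, smul_eq_mul, mul_one]
        exact hcard
    · -- hj : inverse maps into source
      intro μ hμ
      simp only [Finset.mem_filter, Finset.mem_Iic] at hμ
      obtain ⟨hle, hant, hvs, hsum⟩ := hμ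
      simp only [Finset.mem_filter, Finset.mem_univ, true_and]
      constructor
      · rw [Finset.card_filter]
        have hterm : ∀ p : Fin l, (if μ p ≠ α p then 1 else 0) = α p - μ p := by
          intro p
          have h1 := (hvs p).1
          have h2 := (hvs p).2
          by_cases hp : μ p = α p <;> simp [hp] <;> omega
        rw [Finset.sum_congr rfl (fun p _ => hterm p)]
        exact hsum
      · have : (fun p => α p - if μ p ≠ α p then 1 else 0) = μ := by
          funext p
          have h1 := (hvs p).1
          have h2 := (hvs p).2
          by_cases hp : μ p = α p <;> simp [hp] <;> omega
        rw [this]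
        exact hant
    · -- left_inv
      intro S hS
      simp only [Finset.mem_filter, Finset.mem_univ, true_and] at hS
      ext p
      simp only [Finset.mem_filter, Finset.mem_univ, true_and]
      have := hpos p
      by_cases hp : p ∈ S <;> simp [hp] <;> omega
    · -- right_inv
      intro μ hμ
      simp only [Finset.mem_filter, Finset.mem_Iic] at hμ
      obtain ⟨hle, hant, hvs, hsum⟩ := hμ
      funext p
      have h1 := (hvs p).1
      have h2 := (hvs p).2
      simp only [Finset.mem_filter, Finset.mem_univ, true_and]
      by_cases hp : μ p = α p <;> simp [hp] <;> omega
    · -- values agree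
      intro S hS
      congr 1
      funext p
      have := hpos p
      by_cases hp : p ∈ S <;> simp [hp] <;> omega
  -- Step 2: Laplace expansion
  rw [jacobiTrudi, Matrix.det_succ_row_zero, ← Fin.sum_univ_eq_sum_range]
  refine Finset.sum_congr rfl fun c _ => ?_
  have hentry : (Matrix.of fun i j : Fin (l+1) =>
      hInt (Fin m) R ((Fin.cons n (fun i => (α i : ℤ)) : Fin (l+1) → ℤ) i + (j : ℕ) - (i : ℕ))) 0 c
      = hInt (Fin m) R (n + (c : ℕ)) := by
    show hInt (Fin m) R ((Fin.cons n (fun i => (α i : ℤ)) : Fin (l+1) → ℤ) 0 + ((c : Fin (l+1)) : ℕ)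
      - (((0 : Fin (l+1)) : ℕ) : ℤ)) = _
    rw [Fin.cons_zero]
    norm_num
  set Mmat : Matrix (Fin l) (Fin (l+1)) (MvPolynomial (Fin m) R) :=
    Matrix.of fun (p : Fin l) (c' : Fin (l+1)) =>
      hInt (Fin m) R ((α p : ℤ) + (c' : ℕ) - ((p : ℕ) + 1)) with hMmat
  have hsub : (Matrix.of fun i j : Fin (l+1) =>
      hInt (Fin m) R ((Fin.cons n (fun i => (α i : ℤ)) : Fin (l+1) → ℤ) i + (j : ℕ) - (i : ℕ))).submatrix
        Fin.succ c.succAbove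
      = Matrix.of fun p q : Fin l => Mmat p (c.succAbove q) := by
    ext p q
    simp only [Matrix.submatrix_apply, Matrix.of_apply, Fin.cons_succ, hMmat, Fin.val_succ]
    congr 1
    all_goals (push_cast; ring)
  rw [hentry, hsub, det_deleteCol Mmat c]
  have hdetS : ∀ S : Finset (Fin l),
      (Matrix.of fun p q : Fin l => if p ∈ S then Mmat p q.castSucc else Mmat p q.succ).det
      = jacobiTrudi (Fin m) R (fun p => (α p : ℤ) - if p ∈ S then 1 else 0) := by
    intro S
    rw [jacobiTrudi]
    congr 1
    ext p q
    by_cases hp : p ∈ S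
    · simp only [Matrix.of_apply, if_pos hp, hMmat, Fin.coe_castSucc]
      congr 1
      push_cast
      ring
    · simp only [Matrix.of_apply, if_neg hp, hMmat, Fin.val_succ]
      congr 1
      push_cast
      ring
  rw [Finset.sum_congr rfl (fun S _ => hdetS S)]
  rw [hstep (c : ℕ)]


/-- **Base-free form of the vertex operator at `t = 1`.**  For a partition `α` with `l`
positive parts, the power series identity
`Σ_{n ≥ -l} s_{(n,α)}(x) = (Σ_{i ≥ 0} h_i(x)) ⬝ (Σ_{j=0}^{l} (-1)^j Σ_μ s_μ(x))`
holds, where the inner sum ranges over all partitions `μ ⊆ α` with `α/μ` a vertical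
strip of size `j`.  It is stated coefficientwise: for each monomial `d` of total degree
`D`, only the summands `n = j - l` with `j ≤ D + l` and the terms `h_i` with `i ≤ D` can
contribute to the coefficient at `d`, so both infinite sums may be truncated there. -/
theorem vertex_operator_base_free (R : Type*) [CommRing R] (m l : ℕ)
    (α : Fin l → ℕ) (hα : Antitone α) (hpos : ∀ i, 0 < α i)
    (d : Fin m →₀ ℕ) (D : ℕ) (hD : D = d.sum fun _ e => e) :
    (∑ j ∈ Finset.range (D + l + 1),
        coeff d (jacobiTrudi (Fin m) R (Fin.cons ((j : ℤ) - (l : ℤ)) (fun i => (α i : ℤ))))) =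
      coeff d
        ((∑ i ∈ Finset.range (D + 1), hsymm (Fin m) R i) *
          ∑ j ∈ Finset.range (l + 1),
            ((-1 : MvPolynomial (Fin m) R) ^ j) *
              ∑ μ ∈ (Finset.Iic α).filter
                  (fun μ => Antitone μ ∧ IsVerticalStrip α μ ∧ (∑ i, (α i - μ i)) = j),
                jacobiTrudi (Fin m) R (fun i => (μ i : ℤ))) := by
  classical
  set A : ℕ := ∑ i, α i with hA
  have hlA : l ≤ A := by
    calc l = ∑ _i : Fin l, 1 := by simp
    _ ≤ ∑ i, α i := Finset.sum_le_sum fun i _ => hpos i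
  have hdeg : d.degree = D := by
    rw [hD]; rfl
  set Sc : ℕ → MvPolynomial (Fin m) R := fun c =>
    ∑ μ ∈ (Finset.Iic α).filter
        (fun μ => Antitone μ ∧ IsVerticalStrip α μ ∧ (∑ i, (α i - μ i)) = c),
      jacobiTrudi (Fin m) R (fun i => (μ i : ℤ)) with hSc
  have hScHom : ∀ c : ℕ, (Sc c).IsHomogeneous (A - c) := by
    intro c
    apply IsHomogeneous.sum
    intro μ hμ
    simp only [Finset.mem_filter, Finset.mem_Iic] at hμ
    obtain ⟨hle, -, -, hsum⟩ := hμ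
    have h1 : ∑ i, μ i = A - c := by
      have h2 : ∑ i, ((α i - μ i) + μ i) = A := by
        rw [hA]
        exact Finset.sum_congr rfl fun i _ => Nat.sub_add_cancel (hle i)
      rw [Finset.sum_add_distrib, hsum] at h2
      omega
    apply jacobiTrudi_isHomogeneous
    rw [← Nat.cast_sum]
    exact_mod_cast congrArg (Nat.cast : ℕ → ℤ) h1
  have hvan : ∀ (k : ℤ) (c : ℕ), c ≤ A → k ≠ (D : ℤ) - A + c →
      coeff d (hInt (Fin m) R k * Sc c) = 0 := by
    intro k c hcA hk
    by_cases hk0 : 0 ≤ k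
    · have hkn : ((k.toNat : ℕ) : ℤ) = k := Int.toNat_of_nonneg hk0
      have hhom := (hInt_isHomogeneous (σ := Fin m) (R := R) hkn.symm).mul (hScHom c)
      apply hhom.coeff_eq_zero
      rw [hdeg]
      intro hcon
      apply hk
      have hAc : ((A - c : ℕ) : ℤ) = (A : ℤ) - c := by
        push_cast [Nat.cast_sub hcA]; ring
      omega
    · rw [hInt_neg (not_le.mp hk0), zero_mul, coeff_zero]
  have hcoeffneg : ∀ (P : MvPolynomial (Fin m) R) (c : ℕ),
      coeff d ((-1 : MvPolynomial (Fin m) R)^c * P) = (-1 : R)^c * coeff d P := by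
    intro P c
    rw [show ((-1 : MvPolynomial (Fin m) R)^c) = C ((-1 : R)^c) by
      rw [map_pow, map_neg, map_one], coeff_C_mul]
  calc (∑ j ∈ Finset.range (D + l + 1),
        coeff d (jacobiTrudi (Fin m) R (Fin.cons ((j : ℤ) - (l : ℤ)) (fun i => (α i : ℤ)))))
      = ∑ j ∈ Finset.range (D + l + 1), ∑ c ∈ Finset.range (l+1),
          (-1 : R)^c * coeff d (hInt (Fin m) R ((j : ℤ) - l + c) * Sc c) := by
        refine Finset.sum_congr rfl fun j _ => ?_
        rw [jacobiTrudi_cons R m l α hα hpos ((j : ℤ) - (l : ℤ)), coeff_sum]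
        refine Finset.sum_congr rfl fun c _ => ?_
        rw [mul_assoc, hcoeffneg]
    _ = ∑ c ∈ Finset.range (l+1), ∑ j ∈ Finset.range (D + l + 1),
          (-1 : R)^c * coeff d (hInt (Fin m) R ((j : ℤ) - l + c) * Sc c) := Finset.sum_comm
    _ = ∑ c ∈ Finset.range (l+1),
          (-1 : R)^c * coeff d (hInt (Fin m) R ((D : ℤ) - A + c) * Sc c) := by
        refine Finset.sum_congr rfl fun c hc => ?_
        have hcl : c ≤ l := by
          simp only [Finset.mem_range] at hc; omega
        have hcA : c ≤ A := le_trans hcl hlA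
        by_cases hDA : A ≤ D + l
        · rw [Finset.sum_eq_single_of_mem (D + l - A)
            (by simp only [Finset.mem_range]; omega)]
          · have harg : ((D + l - A : ℕ) : ℤ) - l + c = (D : ℤ) - A + c := by
              have : ((D + l - A : ℕ) : ℤ) = (D : ℤ) + l - A := by
                push_cast [Nat.cast_sub hDA]; ring
              omega
            rw [harg]
          · intro j hj hne
            rw [hvan _ c hcA ?_, mul_zero]
            simp only [Finset.mem_range] at hj
            intro hcon
            apply hne
            omega
        · rw [Finset.sum_eq_zero, hInt_neg (by omega : (D : ℤ) - A + c < 0), zero_mul,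
            coeff_zero, mul_zero]
          intro j hj
          simp only [Finset.mem_range] at hj
          rw [hvan _ c hcA (by intro hcon; omega), mul_zero]
    _ = ∑ c ∈ Finset.range (l+1),
          (-1 : R)^c * ∑ i ∈ Finset.range (D + 1), coeff d (hsymm (Fin m) R i * Sc c) := by
        refine Finset.sum_congr rfl fun c hc => ?_
        have hcl : c ≤ l := by simp only [Finset.mem_range] at hc; omega
        have hcA : c ≤ A := le_trans hcl hlA
        congr 1
        by_cases hAc : A ≤ D + c
        · rw [Finset.sum_eq_single_of_mem (D + c - A)
            (by simp only [Finset.mem_range]; omega)]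
          · rw [← hInt_natCast (σ := Fin m) (R := R) (D + c - A)]
            congr 2
            push_cast [Nat.cast_sub hAc]
            ring
          · intro i hi hne
            rw [← hInt_natCast (σ := Fin m) (R := R) i]
            refine hvan _ c hcA ?_
            simp only [Finset.mem_range] at hi
            intro hcon
            apply hne
            omega
        · rw [hInt_neg (by omega : (D : ℤ) - A + c < 0), zero_mul, coeff_zero]
          symm
          apply Finset.sum_eq_zero
          intro i hi
          rw [← hInt_natCast (σ := Fin m) (R := R) i]
          exact hvan _ c hcA (by intro hcon; omega)
    _ = ∑ i ∈ Finset.range (D + 1), ∑ c ∈ Finset.range (l + 1),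
          coeff d (hsymm (Fin m) R i * ((-1 : MvPolynomial (Fin m) R) ^ c * Sc c)) := by
        rw [Finset.sum_comm]
        refine Finset.sum_congr rfl fun c _ => ?_
        rw [Finset.mul_sum]
        refine Finset.sum_congr rfl fun i _ => ?_
        rw [show hsymm (Fin m) R i * ((-1 : MvPolynomial (Fin m) R) ^ c * Sc c)
            = (-1 : MvPolynomial (Fin m) R) ^ c * (hsymm (Fin m) R i * Sc c) by ring,
          hcoeffneg]
    _ = coeff d ((∑ i ∈ Finset.range (D + 1), hsymm (Fin m) R i) *
          ∑ c ∈ Finset.range (l + 1),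
            ((-1 : MvPolynomial (Fin m) R) ^ c) * Sc c) := by
        rw [Finset.sum_mul_sum, coeff_sum]
        refine Finset.sum_congr rfl fun i _ => ?_
        rw [coeff_sum]
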